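/- For the unweighted cycle C_N (N ≥ 3): h(1) = 0; h̄(1) = (N−1)/N if N is odd and h̄(1) = 1 if N is even; and for every natural number 2 ≤ k ≤ N, h(k) = 1/⌊N/k⌋ and h̄(k) = 1 − 1/⌊N/k⌋. -/

import Mathlib

open Finset

namespace DualCheeger

variable {N : ℕ}

/-- The degree of a vertex `u`: `d_u = ∑_v w u v`. -/
def degree (w : Fin N → Fin N → ℝ) (u : Fin N) : ℝ := ∑ v, w u v

/-- A weighted finite graph structure on `Fin N`: symmetric nonnegative weights,
no self-loops, and strictly positive degrees. -/
def IsWeightedGraph (w : Fin N → Fin N → ℝ) : Prop :=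
  (∀ u v, w u v = w v u) ∧ (∀ u v, 0 ≤ w u v) ∧ (∀ u, w u u = 0) ∧
    ∀ u, 0 < degree w u

/-- `|E(A,B)| = ∑_{u ∈ A} ∑_{v ∈ B} w u v`. -/
def Ew (w : Fin N → Fin N → ℝ) (A B : Finset (Fin N)) : ℝ :=
  ∑ u ∈ A, ∑ v ∈ B, w u v

/-- `vol(A) = ∑_{u ∈ A} d_u`. -/
def vol (w : Fin N → Fin N → ℝ) (A : Finset (Fin N)) : ℝ := ∑ u ∈ A, degree w u

/-- The expansion `φ(S) = |E(S, Sᶜ)| / vol(S)`. -/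
noncomputable def expansion (w : Fin N → Fin N → ℝ) (S : Finset (Fin N)) : ℝ :=
  Ew w S Sᶜ / vol w S

/-- `φ̄(V₁,V₂) = 2|E(V₁,V₂)| / vol(V₁ ∪ V₂)`. -/
noncomputable def phibar (w : Fin N → Fin N → ℝ) (V₁ V₂ : Finset (Fin N)) : ℝ :=
  2 * Ew w V₁ V₂ / vol w (V₁ ∪ V₂)

/-- A `k`-subpartition: `k` nonempty pairwise disjoint subsets. -/
def IsSubpartition (k : ℕ) (P : Fin k → Finset (Fin N)) : Prop :=
  (∀ i, (P i).Nonempty) ∧ ∀ i j, i ≠ j → Disjoint (P i) (P j)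

/-- The `k`-way Cheeger constant `h(k)`. -/
noncomputable def cheeger (w : Fin N → Fin N → ℝ) (k : ℕ) : ℝ :=
  sInf { x | ∃ P : Fin k → Finset (Fin N), IsSubpartition k P ∧
    x = ⨆ i, expansion w (P i) }

/-- A `k`-sub-bipartition: `k` pairs of subsets, all `2k` subsets pairwise
disjoint, with each union `V_{2i-1} ∪ V_{2i}` nonempty. -/
def IsSubBipartition (k : ℕ) (P : Fin k → Finset (Fin N) × Finset (Fin N)) : Prop :=
  (∀ i, Disjoint (P i).1 (P i).2) ∧
    (∀ i j, i ≠ j → Disjoint ((P i).1 ∪ (P i).2) ((P j).1 ∪ (P j).2)) ∧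
    ∀ i, ((P i).1 ∪ (P i).2).Nonempty

/-- The `k`-way dual Cheeger constant `h̄(k)`. -/
noncomputable def dualCheeger (w : Fin N → Fin N → ℝ) (k : ℕ) : ℝ :=
  sSup { x | ∃ P : Fin k → Finset (Fin N) × Finset (Fin N), IsSubBipartition k P ∧
    x = ⨅ i, phibar w (P i).1 (P i).2 }

/-- `lam` enumerates the eigenvalues of the normalized Laplacian
`Δ f (u) = f u - d_u⁻¹ ∑_v w u v * f v` in nondecreasing order with multiplicity,
witnessed by a `μ`-orthonormal eigenbasis `f`. -/
def IsLapEigenbasis (w : Fin N → Fin N → ℝ) (lam : Fin N → ℝ)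
    (f : Fin N → Fin N → ℝ) : Prop :=
  Monotone lam ∧
    (∀ i j, (∑ u, degree w u * f i u * f j u) = if i = j then (1 : ℝ) else 0) ∧
    ∀ i u, f i u - (degree w u)⁻¹ * ∑ v, w u v * f i v = lam i * f i u

/-- The dual Rayleigh quotient of a function `f : V → ℝ`. -/
noncomputable def dualRayleigh (w : Fin N → Fin N → ℝ) (f : Fin N → ℝ) : ℝ :=
  (1 / 2 * ∑ u, ∑ v, w u v * (f u + f v) ^ 2) / ∑ u, degree w u * f u ^ 2

/-- The dual Rayleigh quotient of a map `F : V → ℝ^k`. -/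
noncomputable def dualRayleighVec (w : Fin N → Fin N → ℝ) {k : ℕ}
    (F : Fin N → EuclideanSpace ℝ (Fin k)) : ℝ :=
  (1 / 2 * ∑ u, ∑ v, w u v * ‖F u + F v‖ ^ 2) / ∑ u, degree w u * ‖F u‖ ^ 2

/-- The rough projective-space distance `d̄_F` between (the projections of)
`F u` and `F v`. -/
noncomputable def dbar {k : ℕ} (F : Fin N → EuclideanSpace ℝ (Fin k))
    (u v : Fin N) : ℝ :=
  min ‖‖F u‖⁻¹ • F u - ‖F v‖⁻¹ • F v‖ ‖‖F u‖⁻¹ • F u + ‖F v‖⁻¹ • F v‖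

/-- The `l²` mass of `F` on `S`: `ℰ_S = ∑_{u ∈ S} d_u ‖F u‖²`. -/
noncomputable def mass (w : Fin N → Fin N → ℝ) {k : ℕ}
    (F : Fin N → EuclideanSpace ℝ (Fin k)) (S : Finset (Fin N)) : ℝ :=
  ∑ u ∈ S, degree w u * ‖F u‖ ^ 2

/-- The distance `d̄_F(v, T)` from a vertex to a set. -/
noncomputable def dbarSet {k : ℕ} (F : Fin N → EuclideanSpace ℝ (Fin k))
    (v : Fin N) (T : Set (Fin N)) : ℝ :=
  sInf { x | ∃ t ∈ T, x = dbar F v t }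

/-- The modified dual Cheeger constant `h̄*(k)`. -/
noncomputable def dualCheegerStar (w : Fin N → Fin N → ℝ) (k : ℕ) : ℝ :=
  sSup { x | ∃ P : Fin k → Finset (Fin N) × Finset (Fin N), IsSubBipartition k P ∧
    x = ⨅ i, (2 * Ew w (P i).1 (P i).2 + 1 / 2 * Ew w ((P i).1 ∪ (P i).2)
        (Finset.univ \ Finset.univ.biUnion (fun j => (P j).1 ∪ (P j).2))) /
      vol w ((P i).1 ∪ (P i).2) }

/-- `G` is bipartite: `V = A ∪ Aᶜ` with no edges inside `A` nor inside `Aᶜ`. -/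
def IsBipartite (w : Fin N → Fin N → ℝ) : Prop :=
  ∃ A : Finset (Fin N), (∀ u ∈ A, ∀ v ∈ A, w u v = 0) ∧
    ∀ u ∈ Aᶜ, ∀ v ∈ Aᶜ, w u v = 0

/-- The equivalence relation generated by adjacency (connected components). -/
def Reach (w : Fin N → Fin N → ℝ) : Fin N → Fin N → Prop :=
  Relation.EqvGen fun u v => 0 < w u v

/-- `w` is the weight function of a weighted cycle on `Fin N`: symmetric,
nonnegative, and positive exactly on consecutive vertices mod `N`. -/
def IsCycleWeight (N : ℕ) (w : Fin N → Fin N → ℝ) : Prop :=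
  (∀ u v, w u v = w v u) ∧ (∀ u v, 0 ≤ w u v) ∧
    ∀ i j : Fin N, 0 < w i j ↔ ((i.val + 1) % N = j.val ∨ (j.val + 1) % N = i.val)

/-- The unweighted cycle on `Fin N`. -/
noncomputable def cycleWeight (N : ℕ) : Fin N → Fin N → ℝ := fun i j =>
  if (i.val + 1) % N = j.val ∨ (j.val + 1) % N = i.val then 1 else 0

section Basic
variable [NeZero N] (hN : 3 ≤ N)
include hN

lemma val_add_one (u : Fin N) : (u + 1).val = (u.val + 1) % N := by
  rw [Fin.add_def, Fin.val_one', Nat.mod_eq_of_lt (show 1 < N by omega)]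

lemma succ_ne_pred (u : Fin N) : u + 1 ≠ u - 1 := by
  intro h
  have h2 : u + 1 + 1 = u := by rw [h]; exact sub_add_cancel u 1
  have := congrArg Fin.val h2
  rw [val_add_one hN, val_add_one hN, Nat.mod_add_mod] at this
  have hu := u.isLt
  rcases lt_or_ge (u.val + 2) N with h3 | h3
  · rw [Nat.mod_eq_of_lt h3] at this; omega
  · rw [Nat.mod_eq_sub_mod h3, Nat.mod_eq_of_lt (by omega)] at this; omega

lemma weight_ite (u v : Fin N) :
    cycleWeight N u v = if v = u + 1 ∨ v = u - 1 then 1 else 0 := by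
  unfold cycleWeight
  congr 1
  simp only [eq_iff_iff]
  have key : ∀ a b : Fin N, (a.val + 1) % N = b.val ↔ b = a + 1 := by
    intro a b
    constructor
    · intro h; apply Fin.ext; rw [val_add_one hN]; omega
    · intro h; subst h; rw [val_add_one hN]
  rw [key u v, key v u, eq_comm (a := u) (b := v + 1), eq_sub_iff_add_eq]

end Basic


section Basic2
variable [NeZero N] (hN : 3 ≤ N)
include hN

lemma rowSum (u : Fin N) (B : Finset (Fin N)) :
    ∑ v ∈ B, cycleWeight N u v =
      (if u + 1 ∈ B then (1:ℝ) else 0) + (if u - 1 ∈ B then (1:ℝ) else 0) := by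
  have hne := succ_ne_pred hN u
  have : ∀ v ∈ B, cycleWeight N u v =
      (if v = u + 1 then (1:ℝ) else 0) + (if v = u - 1 then (1:ℝ) else 0) := by
    intro v _
    rw [weight_ite hN]
    by_cases h1 : v = u + 1
    · subst h1; simp [hne]
    · by_cases h2 : v = u - 1 <;> simp [h1, h2, Ne.symm hne]
  rw [Finset.sum_congr rfl this, Finset.sum_add_distrib,
    Finset.sum_ite_eq' B (u+1) (fun _ => (1:ℝ)),
    Finset.sum_ite_eq' B (u-1) (fun _ => (1:ℝ))]

lemma degree_two (u : Fin N) : degree (cycleWeight N) u = 2 := by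
  unfold degree
  rw [rowSum hN u Finset.univ]
  norm_num

lemma vol_eq (S : Finset (Fin N)) : vol (cycleWeight N) S = 2 * S.card := by
  unfold vol
  rw [Finset.sum_congr rfl (fun u _ => degree_two hN u), Finset.sum_const]
  push_cast; ring

lemma Ew_eq (A B : Finset (Fin N)) :
    Ew (cycleWeight N) A B =
      ((A.filter fun u => u + 1 ∈ B).card + (B.filter fun v => v + 1 ∈ A).card : ℕ) := by
  unfold Ew
  rw [Finset.sum_congr rfl (fun u _ => rowSum hN u B), Finset.sum_add_distrib]
  rw [Finset.sum_boole, Finset.sum_boole]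
  have : (A.filter fun u => u - 1 ∈ B).card = (B.filter fun v => v + 1 ∈ A).card := by
    apply Finset.card_bij' (fun u _ => u - 1) (fun v _ => v + 1) <;>
      simp_all [sub_add_cancel, add_sub_cancel_right]
  rw [this]
  push_cast
  ring

end Basic2

section Comb
variable [NeZero N] (hN : 3 ≤ N)
include hN

open Fin.NatCast Fin.CommRing in
lemma closure_univ (S : Finset (Fin N)) (hcl : ∀ u ∈ S, u + 1 ∈ S)
    (hne : S.Nonempty) : S = Finset.univ := by
  obtain ⟨u₀, hu₀⟩ := hne
  have key : ∀ m : ℕ, u₀ + (m : Fin N) ∈ S := by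
    intro m
    induction m with
    | zero => simpa using hu₀
    | succ n ih =>
      have : u₀ + ((n+1 : ℕ) : Fin N) = (u₀ + (n : Fin N)) + 1 := by
        push_cast; ring
      rw [this]
      exact hcl _ ih
  apply Finset.eq_univ_of_forall
  intro v
  have := key (v - u₀).val
  rwa [Fin.cast_val_eq_self, add_sub_cancel] at this

lemma cnt_bound (S : Finset (Fin N)) (hne : S.Nonempty) (hproper : S ≠ Finset.univ) :
    (S.filter fun u => u + 1 ∈ S).card + 1 ≤ S.card := by
  have hss : (S.filter fun u => u + 1 ∈ S) ⊂ S := by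
    rw [Finset.ssubset_iff_of_subset (Finset.filter_subset _ _)]
    by_contra h
    push_neg at h
    exact hproper (closure_univ hN S (fun u hu => by
      have := h u hu
      simp only [Finset.mem_filter] at this
      exact this.2) hne)
  have := Finset.card_lt_card hss
  omega

open Fin.NatCast Fin.CommRing in
lemma parity_odd (hodd : Odd N) (V : Finset (Fin N)) :
    ¬ (∀ u : Fin N, (u + 1 ∈ V ↔ u ∉ V)) := by
  intro h
  have key : ∀ m : ℕ, (((0:Fin N) + (m : Fin N) ∈ V) ↔ ((0:Fin N) ∈ V ↔ Even m)) := by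
    intro m
    induction m with
    | zero => simp
    | succ n ih =>
      have e : (0:Fin N) + ((n+1 : ℕ) : Fin N) = ((0:Fin N) + (n : Fin N)) + 1 := by
        push_cast; ring
      rw [e, h ((0:Fin N) + (n : Fin N)), ih, Nat.even_add_one]
      tauto
  have := key N
  rw [Fin.natCast_self] at this
  simp only [add_zero] at this
  rw [Nat.even_iff, Nat.odd_iff.mp hodd] at this
  tauto

end Comb

/-- The arc of vertices with values in `[a, b)`. -/
def arc (N a b : ℕ) : Finset (Fin N) :=
  Finset.univ.filter fun v => a ≤ v.val ∧ v.val < b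

/-- Even-valued vertices of the arc. -/
def arcE (N a b : ℕ) : Finset (Fin N) :=
  Finset.univ.filter fun v => (a ≤ v.val ∧ v.val < b) ∧ Even v.val

/-- Odd-valued vertices of the arc. -/
def arcO (N a b : ℕ) : Finset (Fin N) :=
  Finset.univ.filter fun v => (a ≤ v.val ∧ v.val < b) ∧ ¬ Even v.val

lemma mem_arc {a b : ℕ} {v : Fin N} : v ∈ arc N a b ↔ a ≤ v.val ∧ v.val < b := by
  simp [arc]

lemma card_filter_val (p : ℕ → Prop) [DecidablePred p] :
    (Finset.univ.filter fun v : Fin N => p v.val).card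
      = ((Finset.range N).filter p).card := by
  apply Finset.card_bij (fun v _ => v.val)
  · intro v hv; simp_all [Fin.is_lt]
  · intro u _ v _ h; exact Fin.ext h
  · intro x hx
    simp only [Finset.mem_filter, Finset.mem_range] at hx
    exact ⟨⟨x, hx.1⟩, by simp [hx.2], rfl⟩

lemma arc_card (a b : ℕ) (hb : b ≤ N) : (arc N a b).card = b - a := by
  have h1 : (arc N a b).card = ((Finset.range N).filter fun x => a ≤ x ∧ x < b).card :=
    card_filter_val (fun x => a ≤ x ∧ x < b)
  have h2 : (Finset.range N).filter (fun x => a ≤ x ∧ x < b) = Finset.Ico a b := by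
    ext x; simp only [Finset.mem_filter, Finset.mem_range, Finset.mem_Ico]; omega
  rw [h1, h2, Nat.card_Ico]

lemma arc_nonempty (a b : ℕ) (hab : a < b) (hb : b ≤ N) : (arc N a b).Nonempty :=
  ⟨⟨a, by omega⟩, by simp [mem_arc, hab]⟩

section Arcs
variable [NeZero N] (hN : 3 ≤ N)
include hN

lemma arc_filter_succ (a b : ℕ) (ha : 0 < a ∨ b < N) (hb : b ≤ N) :
    ((arc N a b).filter fun u => u + 1 ∈ arc N a b) = arc N a (b - 1) := by
  ext u
  have hu := u.isLt
  simp only [Finset.mem_filter, mem_arc, val_add_one hN]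
  rcases lt_or_ge (u.val + 1) N with h | h
  · rw [Nat.mod_eq_of_lt h]; omega
  · have h0 : (u.val + 1) % N = 0 := by
      have : u.val + 1 = N := by omega
      rw [this, Nat.mod_self]
    rw [h0]; omega

lemma arcE_union_arcO (a b : ℕ) : arcE N a b ∪ arcO N a b = arc N a b := by
  ext u; simp only [arcE, arcO, arc, Finset.mem_union, Finset.mem_filter]; tauto

lemma arcE_disj_arcO (a b : ℕ) : Disjoint (arcE N a b) (arcO N a b) := by
  rw [Finset.disjoint_left]
  intro u h1 h2
  simp only [arcE, arcO, Finset.mem_filter] at h1 h2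
  tauto

lemma arc_cross_union (a b : ℕ) (ha : 0 < a ∨ b < N) (hb : b ≤ N) :
    ((arcE N a b).filter fun u => u + 1 ∈ arcO N a b) ∪
      ((arcO N a b).filter fun u => u + 1 ∈ arcE N a b) = arc N a (b - 1) := by
  ext u
  have hu := u.isLt
  simp only [Finset.mem_union, Finset.mem_filter, arcE, arcO, mem_arc,
    Finset.mem_univ, true_and, val_add_one hN]
  rcases lt_or_ge (u.val + 1) N with h | h
  · rw [Nat.mod_eq_of_lt h]
    simp only [Nat.even_add_one, Nat.even_iff]
    omega
  · have h0 : (u.val + 1) % N = 0 := by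
      have : u.val + 1 = N := by omega
      rw [this, Nat.mod_self]
    rw [h0]
    simp only [Nat.even_add_one, Nat.even_iff, Nat.zero_mod, not_true, not_false_iff,
      and_true, true_and, and_false, false_and, or_false, false_or, le_refl]
    omega

lemma arc_cross_union_odd (hodd : Odd N) :
    ((arcE N 0 N).filter fun u => u + 1 ∈ arcO N 0 N) ∪
      ((arcO N 0 N).filter fun u => u + 1 ∈ arcE N 0 N) = arc N 0 (N - 1) := by
  have hN2 := Nat.odd_iff.mp hodd
  ext u
  have hu := u.isLt
  simp only [Finset.mem_union, Finset.mem_filter, arcE, arcO, mem_arc,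
    Finset.mem_univ, true_and, val_add_one hN]
  rcases lt_or_ge (u.val + 1) N with h | h
  · rw [Nat.mod_eq_of_lt h]
    simp only [Nat.even_add_one, Nat.even_iff]
    omega
  · have h0 : (u.val + 1) % N = 0 := by
      have : u.val + 1 = N := by omega
      rw [this, Nat.mod_self]
    rw [h0]
    simp only [Nat.even_add_one, Nat.even_iff, Nat.zero_mod, not_true, not_false_iff,
      and_true, true_and, and_false, false_and, or_false, false_or, le_refl]
    omega

lemma arc_cross_union_even (heven : Even N) :
    ((arcE N 0 N).filter fun u => u + 1 ∈ arcO N 0 N) ∪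
      ((arcO N 0 N).filter fun u => u + 1 ∈ arcE N 0 N) = arc N 0 N := by
  have hN2 := Nat.even_iff.mp heven
  ext u
  have hu := u.isLt
  simp only [Finset.mem_union, Finset.mem_filter, arcE, arcO, mem_arc,
    Finset.mem_univ, true_and, val_add_one hN]
  rcases lt_or_ge (u.val + 1) N with h | h
  · rw [Nat.mod_eq_of_lt h]
    simp only [Nat.even_add_one, Nat.even_iff]
    omega
  · have h0 : (u.val + 1) % N = 0 := by
      have : u.val + 1 = N := by omega
      rw [this, Nat.mod_self]
    rw [h0]
    simp only [Nat.even_add_one, Nat.even_iff, Nat.zero_mod, not_true, not_false_iff,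
      and_true, true_and, and_false, false_and, or_false, false_or, le_refl]
    omega

lemma arc_univ : arc N 0 N = Finset.univ := by
  apply Finset.eq_univ_of_forall
  intro v
  simp [mem_arc, v.isLt]

end Arcs


lemma Ew_add_compl (w : Fin N → Fin N → ℝ) (S : Finset (Fin N)) :
    Ew w S S + Ew w S Sᶜ = vol w S := by
  unfold Ew vol degree
  rw [← Finset.sum_add_distrib]
  exact Finset.sum_congr rfl fun u _ => Finset.sum_add_sum_compl S _

lemma cw_nonneg (u v : Fin N) : 0 ≤ cycleWeight N u v := by
  unfold cycleWeight; split <;> norm_num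

lemma Ew_nonneg (A B : Finset (Fin N)) : 0 ≤ Ew (cycleWeight N) A B :=
  Finset.sum_nonneg fun u _ => Finset.sum_nonneg fun v _ => cw_nonneg u v

section Exp
variable [NeZero N] (hN : 3 ≤ N)
include hN

lemma expansion_nonneg (S : Finset (Fin N)) : 0 ≤ expansion (cycleWeight N) S := by
  unfold expansion
  apply div_nonneg (Ew_nonneg S Sᶜ)
  rw [vol_eq hN]
  positivity

lemma expansion_eq (S : Finset (Fin N)) :
    expansion (cycleWeight N) S =
      (2 * S.card - 2 * (S.filter fun u => u + 1 ∈ S).card) / (2 * S.card) := by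
  unfold expansion
  rw [vol_eq hN]
  congr 1
  have h1 := Ew_add_compl (cycleWeight N) S
  rw [vol_eq hN] at h1
  have h2 := Ew_eq hN S S
  push_cast at h2 ⊢
  linarith

lemma expansion_lb (S : Finset (Fin N)) (hne : S.Nonempty) (hpr : S ≠ Finset.univ) :
    1 / (S.card : ℝ) ≤ expansion (cycleWeight N) S := by
  rw [expansion_eq hN]
  have hc : 0 < S.card := Finset.card_pos.mpr hne
  have hcnt := cnt_bound hN S hne hpr
  have hcR : (0:ℝ) < (S.card : ℝ) := by exact_mod_cast hc
  rw [div_le_div_iff₀ (by positivity) (by positivity)]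
  have hx : ((S.filter fun u => u + 1 ∈ S).card : ℝ) + 1 ≤ (S.card : ℝ) := by
    exact_mod_cast hcnt
  nlinarith

lemma expansion_arc (a b : ℕ) (hab : a < b) (hb : b ≤ N) (ha : 0 < a ∨ b < N) :
    expansion (cycleWeight N) (arc N a b) = 1 / ((b - a : ℕ) : ℝ) := by
  rw [expansion_eq hN, arc_filter_succ hN a b ha hb, arc_card a b hb,
    arc_card a (b-1) (by omega)]
  have h1 : ((b - 1 - a : ℕ) : ℝ) = ((b - a : ℕ) : ℝ) - 1 := by
    rw [Nat.cast_sub (by omega : a ≤ b - 1), Nat.cast_sub (by omega : 1 ≤ b),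
      Nat.cast_sub (by omega : a ≤ b)]
    ring
  rw [h1]
  have hc : (0:ℝ) < ((b - a : ℕ) : ℝ) := by
    have : 0 < b - a := by omega
    exact_mod_cast this
  generalize ((b - a : ℕ) : ℝ) = c at h1 hc ⊢
  rw [div_eq_div_iff (by positivity) (by positivity)]
  ring

end Exp

section Phibar
variable [NeZero N] (hN : 3 ≤ N)
include hN

lemma phibar_eq (V₁ V₂ : Finset (Fin N)) (hd : Disjoint V₁ V₂) :
    phibar (cycleWeight N) V₁ V₂ =
      (((V₁.filter fun u => u + 1 ∈ V₂) ∪ (V₂.filter fun u => u + 1 ∈ V₁)).card : ℝ)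
        / ((V₁ ∪ V₂).card : ℝ) := by
  unfold phibar
  rw [vol_eq hN, Ew_eq hN]
  have hdf : Disjoint (V₁.filter fun u => u + 1 ∈ V₂) (V₂.filter fun u => u + 1 ∈ V₁) :=
    Finset.disjoint_filter_filter hd
  rw [Finset.card_union_of_disjoint hdf]
  push_cast
  ring

lemma filters_subset (V₁ V₂ : Finset (Fin N)) :
    (V₁.filter fun u => u + 1 ∈ V₂) ∪ (V₂.filter fun u => u + 1 ∈ V₁) ⊆
      ((V₁ ∪ V₂).filter fun u => u + 1 ∈ V₁ ∪ V₂) := by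
  intro u hu
  simp only [Finset.mem_union, Finset.mem_filter] at hu ⊢
  tauto

lemma phibar_le_one (V₁ V₂ : Finset (Fin N)) (hd : Disjoint V₁ V₂) :
    phibar (cycleWeight N) V₁ V₂ ≤ 1 := by
  rw [phibar_eq hN V₁ V₂ hd]
  rcases Finset.eq_empty_or_nonempty (V₁ ∪ V₂) with h | h
  · rw [h]
    have : (V₁.filter fun u => u + 1 ∈ V₂) ∪ (V₂.filter fun u => u + 1 ∈ V₁) = ∅ :=
      Finset.subset_empty.mp ((filters_subset hN V₁ V₂).trans (by rw [h]; simp))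
    rw [this]; simp
  · have hc : 0 < ((V₁ ∪ V₂).card : ℝ) := by exact_mod_cast Finset.card_pos.mpr h
    rw [div_le_one hc]
    have := Finset.card_le_card ((filters_subset hN V₁ V₂).trans (Finset.filter_subset _ _))
    exact_mod_cast this

lemma phibar_le_proper (V₁ V₂ : Finset (Fin N)) (hd : Disjoint V₁ V₂)
    (hne : (V₁ ∪ V₂).Nonempty) (hpr : V₁ ∪ V₂ ≠ Finset.univ) :
    phibar (cycleWeight N) V₁ V₂ ≤ 1 - 1 / ((V₁ ∪ V₂).card : ℝ) := by
  rw [phibar_eq hN V₁ V₂ hd]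
  have hc : 0 < ((V₁ ∪ V₂).card : ℝ) := by exact_mod_cast Finset.card_pos.mpr hne
  have h1 : ((V₁.filter fun u => u + 1 ∈ V₂) ∪ (V₂.filter fun u => u + 1 ∈ V₁)).card + 1
      ≤ (V₁ ∪ V₂).card :=
    le_trans (by
      have := Finset.card_le_card (filters_subset hN V₁ V₂)
      omega) (cnt_bound hN _ hne hpr)
  have h2 : (((V₁.filter fun u => u + 1 ∈ V₂) ∪ (V₂.filter fun u => u + 1 ∈ V₁)).card : ℝ) + 1
      ≤ ((V₁ ∪ V₂).card : ℝ) := by exact_mod_cast h1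
  rw [div_le_iff₀ hc]
  have h3 : (1 - 1 / ((V₁ ∪ V₂).card : ℝ)) * ((V₁ ∪ V₂).card : ℝ)
      = ((V₁ ∪ V₂).card : ℝ) - 1 := by
    rw [sub_mul, one_mul, one_div, inv_mul_cancel₀ (ne_of_gt hc)]
  rw [h3]
  linarith

lemma phibar_le_univ_odd (hodd : Odd N) (V₁ V₂ : Finset (Fin N)) (hd : Disjoint V₁ V₂)
    (huniv : V₁ ∪ V₂ = Finset.univ) :
    phibar (cycleWeight N) V₁ V₂ ≤ 1 - 1 / (N : ℝ) := by
  rw [phibar_eq hN V₁ V₂ hd, huniv]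
  have hNpos : (0:ℝ) < (N : ℝ) := by positivity
  have hcard : (Finset.univ : Finset (Fin N)).card = N := by simp
  have h1 : ((V₁.filter fun u => u + 1 ∈ V₂) ∪ (V₂.filter fun u => u + 1 ∈ V₁)) ≠
      (Finset.univ : Finset (Fin N)) := by
    intro h
    apply parity_odd hN hodd V₁
    intro u
    have hu : u ∈ (V₁.filter fun u => u + 1 ∈ V₂) ∪ (V₂.filter fun u => u + 1 ∈ V₁) := by
      rw [h]; exact Finset.mem_univ u
    simp only [Finset.mem_union, Finset.mem_filter] at hu
    have hdl := Finset.disjoint_left.mp hd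
    rcases hu with ⟨h1, h2⟩ | ⟨h1, h2⟩
    · exact ⟨fun h3 => absurd h2 (hdl h3), fun h3 => absurd h1 h3⟩
    · exact ⟨fun _ => Finset.disjoint_right.mp hd h1, fun _ => h2⟩
  have h2 : ((V₁.filter fun u => u + 1 ∈ V₂) ∪ (V₂.filter fun u => u + 1 ∈ V₁)).card < N := by
    have := Finset.card_lt_card (Finset.ssubset_univ_iff.mpr h1)
    simpa using this
  have h3 : (((V₁.filter fun u => u + 1 ∈ V₂) ∪ (V₂.filter fun u => u + 1 ∈ V₁)).card : ℝ)
      ≤ (N : ℝ) - 1 := by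
    have h4 : ((V₁.filter fun u => u + 1 ∈ V₂) ∪ (V₂.filter fun u => u + 1 ∈ V₁)).card + 1 ≤ N := h2
    have h5 : (((V₁.filter fun u => u + 1 ∈ V₂) ∪ (V₂.filter fun u => u + 1 ∈ V₁)).card : ℝ) + 1
        ≤ (N : ℝ) := by exact_mod_cast h4
    linarith
  rw [hcard]
  rw [div_le_iff₀ hNpos, sub_mul, one_mul, one_div, inv_mul_cancel₀ (ne_of_gt hNpos)]
  linarith

end Phibar

section PhibarVals
variable [NeZero N] (hN : 3 ≤ N)
include hN

lemma phibar_arc (a b : ℕ) (hab : a < b) (hb : b ≤ N) (ha : 0 < a ∨ b < N) :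
    phibar (cycleWeight N) (arcE N a b) (arcO N a b) = 1 - 1 / ((b - a : ℕ) : ℝ) := by
  rw [phibar_eq hN _ _ (arcE_disj_arcO hN a b), arc_cross_union hN a b ha hb,
    arcE_union_arcO hN a b, arc_card a (b-1) (by omega), arc_card a b hb]
  have hc : (0:ℝ) < ((b - a : ℕ) : ℝ) := by
    have : 0 < b - a := by omega
    exact_mod_cast this
  have h1 : ((b - 1 - a : ℕ) : ℝ) = ((b - a : ℕ) : ℝ) - 1 := by
    rw [Nat.cast_sub (by omega : a ≤ b - 1), Nat.cast_sub (by omega : 1 ≤ b),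
      Nat.cast_sub (by omega : a ≤ b)]
    ring
  rw [h1, sub_div, div_self (ne_of_gt hc)]

lemma phibar_global_odd (hodd : Odd N) :
    phibar (cycleWeight N) (arcE N 0 N) (arcO N 0 N) = ((N : ℝ) - 1) / (N : ℝ) := by
  rw [phibar_eq hN _ _ (arcE_disj_arcO hN 0 N), arc_cross_union_odd hN hodd,
    arcE_union_arcO hN 0 N, arc_card 0 (N-1) (by omega), arc_card 0 N le_rfl]
  have h1 : ((N - 1 - 0 : ℕ) : ℝ) = (N : ℝ) - 1 := by
    rw [Nat.sub_zero, Nat.cast_sub (by omega : 1 ≤ N)]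
    norm_num
  rw [h1, Nat.sub_zero]

lemma phibar_global_even (heven : Even N) :
    phibar (cycleWeight N) (arcE N 0 N) (arcO N 0 N) = 1 := by
  rw [phibar_eq hN _ _ (arcE_disj_arcO hN 0 N), arc_cross_union_even hN heven,
    arcE_union_arcO hN 0 N, arc_card 0 N le_rfl, Nat.sub_zero]
  have : (0:ℝ) < (N : ℝ) := by positivity
  rw [div_self (ne_of_gt this)]

end PhibarVals

lemma exists_small (k : ℕ) (hk : 1 ≤ k) (S : Fin k → Finset (Fin N))
    (hdisj : ∀ i j, i ≠ j → Disjoint (S i) (S j)) : ∃ i, (S i).card ≤ N / k := by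
  by_contra h
  push_neg at h
  have hsum : ∑ i, (S i).card ≤ N := by
    rw [← Finset.card_biUnion (fun i _ => fun j _ hij => hdisj i j hij)]
    exact le_trans (Finset.card_le_univ _) (by simp)
  have h2 : ∑ _i : Fin k, (N / k + 1) ≤ ∑ i, (S i).card :=
    Finset.sum_le_sum fun i _ => h i
  rw [Finset.sum_const, Finset.card_univ, Fintype.card_fin, smul_eq_mul] at h2
  have h3 : N / k + 1 ≤ N / k := by
    rw [Nat.le_div_iff_mul_le (by omega : 0 < k)]
    calc (N / k + 1) * k = k * (N / k + 1) := by ring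
    _ ≤ ∑ i, (S i).card := h2
    _ ≤ N := hsum
  omega


lemma arc_disjoint (a b c d : ℕ) (h : b ≤ c ∨ d ≤ a) :
    Disjoint (arc N a b) (arc N c d) := by
  rw [Finset.disjoint_left]
  intro u h1 h2
  rw [mem_arc] at h1 h2
  omega

section Main
variable [NeZero N] (hN : 3 ≤ N)
include hN

lemma expansion_univ_eq : expansion (cycleWeight N) (Finset.univ : Finset (Fin N)) = 0 := by
  unfold expansion Ew
  rw [Finset.compl_univ]
  simp

theorem cheeger_one' : cheeger (cycleWeight N) 1 = 0 := by
  haveI : Nonempty (Fin N) := ⟨⟨0, by omega⟩⟩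
  have hmem : (0:ℝ) ∈ { x | ∃ P : Fin 1 → Finset (Fin N), IsSubpartition 1 P ∧
      x = ⨆ i, expansion (cycleWeight N) (P i) } := by
    refine ⟨fun _ => Finset.univ,
      ⟨fun _ => Finset.univ_nonempty, fun i j hij => absurd (Subsingleton.elim i j) hij⟩, ?_⟩
    rw [ciSup_unique, expansion_univ_eq hN]
  have hlb : ∀ x ∈ { x | ∃ P : Fin 1 → Finset (Fin N), IsSubpartition 1 P ∧
      x = ⨆ i, expansion (cycleWeight N) (P i) }, (0:ℝ) ≤ x := by
    rintro x ⟨P, hP, rfl⟩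
    rw [ciSup_unique]
    exact expansion_nonneg hN _
  exact le_antisymm (csInf_le ⟨0, hlb⟩ hmem) (le_csInf ⟨0, hmem⟩ hlb)

theorem dual_one_odd' (hodd : Odd N) :
    dualCheeger (cycleWeight N) 1 = ((N : ℝ) - 1) / N := by
  haveI : Nonempty (Fin N) := ⟨⟨0, by omega⟩⟩
  have hNpos : (0:ℝ) < (N : ℝ) := by positivity
  have hval : ((N : ℝ) - 1) / N = 1 - 1 / (N : ℝ) := by
    field_simp
  have hmem : (((N : ℝ) - 1) / N) ∈ { x | ∃ P : Fin 1 → Finset (Fin N) × Finset (Fin N),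
      IsSubBipartition 1 P ∧ x = ⨅ i, phibar (cycleWeight N) (P i).1 (P i).2 } := by
    refine ⟨fun _ => (arcE N 0 N, arcO N 0 N),
      ⟨fun _ => arcE_disj_arcO hN 0 N,
       fun i j hij => absurd (Subsingleton.elim i j) hij,
       fun _ => by rw [arcE_union_arcO hN, arc_univ hN]; exact Finset.univ_nonempty⟩, ?_⟩
    rw [ciInf_unique]
    exact (phibar_global_odd hN hodd).symm
  have hub : ∀ x ∈ { x | ∃ P : Fin 1 → Finset (Fin N) × Finset (Fin N),
      IsSubBipartition 1 P ∧ x = ⨅ i, phibar (cycleWeight N) (P i).1 (P i).2 },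
      x ≤ ((N : ℝ) - 1) / N := by
    rintro x ⟨P, ⟨hd, _, hne⟩, rfl⟩
    rw [ciInf_unique, hval]
    rcases eq_or_ne ((P default).1 ∪ (P default).2) Finset.univ with h | h
    · exact phibar_le_univ_odd hN hodd _ _ (hd default) h
    · refine le_trans (phibar_le_proper hN _ _ (hd default) (hne default) h) ?_
      have hc1 : 0 < (((P default).1 ∪ (P default).2).card : ℝ) := by
        exact_mod_cast Finset.card_pos.mpr (hne default)
      have hc2 : (((P default).1 ∪ (P default).2).card : ℝ) ≤ (N : ℝ) := by
        exact_mod_cast (Finset.card_le_univ _).trans (by simp)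
      have := one_div_le_one_div_of_le hc1 hc2
      linarith
  exact le_antisymm (csSup_le ⟨_, hmem⟩ hub) (le_csSup ⟨_, hub⟩ hmem)

theorem dual_one_even' (heven : Even N) :
    dualCheeger (cycleWeight N) 1 = 1 := by
  haveI : Nonempty (Fin N) := ⟨⟨0, by omega⟩⟩
  have hmem : (1:ℝ) ∈ { x | ∃ P : Fin 1 → Finset (Fin N) × Finset (Fin N),
      IsSubBipartition 1 P ∧ x = ⨅ i, phibar (cycleWeight N) (P i).1 (P i).2 } := by
    refine ⟨fun _ => (arcE N 0 N, arcO N 0 N),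
      ⟨fun _ => arcE_disj_arcO hN 0 N,
       fun i j hij => absurd (Subsingleton.elim i j) hij,
       fun _ => by rw [arcE_union_arcO hN, arc_univ hN]; exact Finset.univ_nonempty⟩, ?_⟩
    rw [ciInf_unique]
    exact (phibar_global_even hN heven).symm
  have hub : ∀ x ∈ { x | ∃ P : Fin 1 → Finset (Fin N) × Finset (Fin N),
      IsSubBipartition 1 P ∧ x = ⨅ i, phibar (cycleWeight N) (P i).1 (P i).2 },
      x ≤ (1:ℝ) := by
    rintro x ⟨P, ⟨hd, _, _⟩, rfl⟩
    rw [ciInf_unique]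
    exact phibar_le_one hN _ _ (hd default)
  exact le_antisymm (csSup_le ⟨_, hmem⟩ hub) (le_csSup ⟨_, hub⟩ hmem)

end Main

section MainK
variable [NeZero N] (hN : 3 ≤ N) {k : ℕ} (hk2 : 2 ≤ k) (hkN : k ≤ N)
include hN hk2 hkN

lemma m_pos : 1 ≤ N / k := (Nat.one_le_div_iff (by omega)).mpr hkN

lemma arc_bound (i : Fin k) : i.val * (N / k) + (N / k) ≤ N := by
  have h1 : (i.val + 1) * (N / k) ≤ k * (N / k) :=
    Nat.mul_le_mul_right _ (by omega)
  have h2 : k * (N / k) ≤ N := Nat.mul_div_le N k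
  rw [add_one_mul] at h1
  omega

lemma arc_side (i : Fin k) : 0 < i.val * (N / k) ∨ i.val * (N / k) + (N / k) < N := by
  rcases Nat.eq_zero_or_pos i.val with h | h
  · right
    rw [h, zero_mul, zero_add]
    calc N / k ≤ N / 2 := Nat.div_le_div_left hk2 (by omega)
    _ < N := Nat.div_lt_self (by omega) (by omega)
  · left
    exact Nat.mul_pos h (m_pos hN hk2 hkN)

lemma exists_other (i₀ : Fin k) : ∃ j : Fin k, j ≠ i₀ := by
  rcases Nat.eq_zero_or_pos i₀.val with h | h
  · exact ⟨⟨1, by omega⟩, by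
      intro hc
      have := congrArg Fin.val hc
      simp only [Fin.val_mk] at this
      omega⟩
  · exact ⟨⟨0, by omega⟩, by
      intro hc
      have := congrArg Fin.val hc
      simp only [Fin.val_mk] at this
      omega⟩

theorem cheeger_k' : cheeger (cycleWeight N) k = 1 / ((N / k : ℕ) : ℝ) := by
  haveI : Nonempty (Fin k) := ⟨⟨0, by omega⟩⟩
  set m := N / k with hm
  have hm1 : 1 ≤ m := m_pos hN hk2 hkN
  set P : Fin k → Finset (Fin N) := fun i => arc N (i.val * m) (i.val * m + m) with hP
  have hsub : IsSubpartition k P := by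
    constructor
    · intro i
      exact arc_nonempty _ _ (by omega) (arc_bound hN hk2 hkN i)
    · intro i j hij
      have hv : i.val ≠ j.val := fun hc => hij (Fin.ext hc)
      apply arc_disjoint
      rcases lt_or_gt_of_ne hv with h | h
      · left
        have := Nat.mul_le_mul_right m (show i.val + 1 ≤ j.val by omega)
        rw [add_one_mul] at this
        omega
      · right
        have := Nat.mul_le_mul_right m (show j.val + 1 ≤ i.val by omega)
        rw [add_one_mul] at this
        omega
  have hval : ∀ i, expansion (cycleWeight N) (P i) = 1 / ((m:ℕ) : ℝ) := by
    intro i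
    rw [hP]
    rw [expansion_arc hN _ _ (by omega) (arc_bound hN hk2 hkN i) (arc_side hN hk2 hkN i)]
    congr 2
    exact Nat.add_sub_cancel_left _ _
  have hmem : (1 / ((m:ℕ) : ℝ)) ∈ { x | ∃ P : Fin k → Finset (Fin N), IsSubpartition k P ∧
      x = ⨆ i, expansion (cycleWeight N) (P i) } := by
    refine ⟨P, hsub, ?_⟩
    rw [show (⨆ i, expansion (cycleWeight N) (P i)) = ⨆ _ : Fin k, 1 / ((m:ℕ) : ℝ) by
      exact iSup_congr hval]
    exact (ciSup_const).symm
  have hlb : ∀ x ∈ { x | ∃ P : Fin k → Finset (Fin N), IsSubpartition k P ∧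
      x = ⨆ i, expansion (cycleWeight N) (P i) }, (1 / ((m:ℕ) : ℝ)) ≤ x := by
    rintro x ⟨Q, ⟨hQne, hQdisj⟩, rfl⟩
    obtain ⟨i₀, hi₀⟩ := exists_small k (by omega) Q hQdisj
    have hproper : Q i₀ ≠ Finset.univ := by
      obtain ⟨j, hj⟩ := exists_other hN hk2 hkN i₀
      obtain ⟨v, hv⟩ := hQne j
      intro hc
      exact Finset.disjoint_left.mp (hQdisj j i₀ hj) hv (hc ▸ Finset.mem_univ v)
    have h1 := expansion_lb hN (Q i₀) (hQne i₀) hproper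
    have hc1 : 0 < ((Q i₀).card : ℝ) := by
      exact_mod_cast Finset.card_pos.mpr (hQne i₀)
    have hc2 : ((Q i₀).card : ℝ) ≤ ((m:ℕ) : ℝ) := by exact_mod_cast hi₀
    have h2 : 1 / ((m:ℕ) : ℝ) ≤ 1 / ((Q i₀).card : ℝ) :=
      one_div_le_one_div_of_le hc1 hc2
    refine le_trans (le_trans h2 h1) ?_
    exact le_ciSup (f := fun i => expansion (cycleWeight N) (Q i)) (Set.Finite.bddAbove (Set.finite_range _)) i₀
  exact le_antisymm (csInf_le ⟨_, hlb⟩ hmem) (le_csInf ⟨_, hmem⟩ hlb)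

theorem dual_k' : dualCheeger (cycleWeight N) k = 1 - 1 / ((N / k : ℕ) : ℝ) := by
  haveI : Nonempty (Fin k) := ⟨⟨0, by omega⟩⟩
  set m := N / k with hm
  have hm1 : 1 ≤ m := m_pos hN hk2 hkN
  set Q : Fin k → Finset (Fin N) × Finset (Fin N) :=
    fun i => (arcE N (i.val * m) (i.val * m + m), arcO N (i.val * m) (i.val * m + m)) with hQ
  have hQu : ∀ i, (Q i).1 ∪ (Q i).2 = arc N (i.val * m) (i.val * m + m) := by
    intro i
    rw [hQ]
    exact arcE_union_arcO hN _ _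
  have hsub : IsSubBipartition k Q := by
    refine ⟨fun i => arcE_disj_arcO hN _ _, ?_, ?_⟩
    · intro i j hij
      rw [hQu, hQu]
      have hv : i.val ≠ j.val := fun hc => hij (Fin.ext hc)
      apply arc_disjoint
      rcases lt_or_gt_of_ne hv with h | h
      · left
        have := Nat.mul_le_mul_right m (show i.val + 1 ≤ j.val by omega)
        rw [add_one_mul] at this
        omega
      · right
        have := Nat.mul_le_mul_right m (show j.val + 1 ≤ i.val by omega)
        rw [add_one_mul] at this
        omega
    · intro i
      rw [hQu]
      exact arc_nonempty _ _ (by omega) (arc_bound hN hk2 hkN i)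
  have hval : ∀ i, phibar (cycleWeight N) (Q i).1 (Q i).2 = 1 - 1 / ((m:ℕ) : ℝ) := by
    intro i
    rw [hQ]
    rw [phibar_arc hN _ _ (by omega) (arc_bound hN hk2 hkN i) (arc_side hN hk2 hkN i)]
    congr 3
    exact Nat.add_sub_cancel_left _ _
  have hmem : (1 - 1 / ((m:ℕ) : ℝ)) ∈ { x | ∃ P : Fin k → Finset (Fin N) × Finset (Fin N),
      IsSubBipartition k P ∧ x = ⨅ i, phibar (cycleWeight N) (P i).1 (P i).2 } := by
    refine ⟨Q, hsub, ?_⟩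
    rw [show (⨅ i, phibar (cycleWeight N) (Q i).1 (Q i).2) = ⨅ _ : Fin k, 1 - 1 / ((m:ℕ) : ℝ) by
      exact iInf_congr hval]
    exact (ciInf_const).symm
  have hub : ∀ x ∈ { x | ∃ P : Fin k → Finset (Fin N) × Finset (Fin N),
      IsSubBipartition k P ∧ x = ⨅ i, phibar (cycleWeight N) (P i).1 (P i).2 },
      x ≤ 1 - 1 / ((m:ℕ) : ℝ) := by
    rintro x ⟨R, ⟨hd, hcross, hne⟩, rfl⟩
    obtain ⟨i₀, hi₀⟩ := exists_small k (by omega) (fun i => (R i).1 ∪ (R i).2) hcross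
    have hproper : (R i₀).1 ∪ (R i₀).2 ≠ Finset.univ := by
      obtain ⟨j, hj⟩ := exists_other hN hk2 hkN i₀
      obtain ⟨v, hv⟩ := hne j
      intro hc
      exact Finset.disjoint_left.mp (hcross j i₀ hj) hv (hc ▸ Finset.mem_univ v)
    have h1 := phibar_le_proper hN _ _ (hd i₀) (hne i₀) hproper
    have hc1 : 0 < (((R i₀).1 ∪ (R i₀).2).card : ℝ) := by
      exact_mod_cast Finset.card_pos.mpr (hne i₀)
    have hc2 : (((R i₀).1 ∪ (R i₀).2).card : ℝ) ≤ ((m:ℕ) : ℝ) := by exact_mod_cast hi₀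
    have h2 : 1 / ((m:ℕ) : ℝ) ≤ 1 / (((R i₀).1 ∪ (R i₀).2).card : ℝ) :=
      one_div_le_one_div_of_le hc1 hc2
    refine le_trans (ciInf_le (f := fun i => phibar (cycleWeight N) (R i).1 (R i).2) (Set.Finite.bddBelow (Set.finite_range _)) i₀) ?_
    linarith
  exact le_antisymm (csSup_le ⟨_, hmem⟩ hub) (le_csSup ⟨_, hub⟩ hmem)

end MainK

/-- Proposition 7.3: Cheeger and dual Cheeger constants of the unweighted
cycle `C_N`. -/
theorem unweighted_cycle_cheeger_constants {N : ℕ} (hN : 3 ≤ N) :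
    cheeger (cycleWeight N) 1 = 0 ∧
    (Odd N → dualCheeger (cycleWeight N) 1 = ((N : ℝ) - 1) / N) ∧
    (Even N → dualCheeger (cycleWeight N) 1 = 1) ∧
    ∀ k : ℕ, 2 ≤ k → k ≤ N →
      cheeger (cycleWeight N) k = 1 / ((N / k : ℕ) : ℝ) ∧
      dualCheeger (cycleWeight N) k = 1 - 1 / ((N / k : ℕ) : ℝ) := by
  haveI : NeZero N := ⟨by omega⟩
  exact ⟨cheeger_one' hN, fun h => dual_one_odd' hN h, fun h => dual_one_even' hN h,
    fun k hk2 hkN => ⟨cheeger_k' hN hk2 hkN, dual_k' hN hk2 hkN⟩⟩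

end DualCheeger
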